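/- Let T'_1,…,T'_m be pairwise disjoint measurable subsets of a cube [0,n]^d in ℝ^d, each of volume at most 1, with total volume at least n^d/k, and suppose the Minkowski sums T'_i + B(0, t/2) are pairwise disjoint subsets of [−t/2, n+t/2]^d. Then (1 + v_{t/2}^{1/d})^d · n^d / k ≤ (n+t)^d, where v_{t/2} is the volume of the d-dimensional ball of radius t/2. -/

import Mathlib

open MeasureTheory Set Pointwise Metric Filter Topology

set_option linter.unusedSectionVars false
set_option maxHeartbeats 1000000

noncomputable section

variable {d : ℕ} {ι : Type} [DecidableEq ι]

/-- open box -/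
def Box (a b : Fin d → ℝ) : Set (Fin d → ℝ) := Set.pi Set.univ fun i => Ioo (a i) (b i)

lemma box_isOpen (a b : Fin d → ℝ) : IsOpen (Box a b) :=
  isOpen_set_pi finite_univ fun _ _ => isOpen_Ioo

lemma box_meas (a b : Fin d → ℝ) : MeasurableSet (Box a b) :=
  MeasurableSet.univ_pi fun _ => measurableSet_Ioo

lemma volume_box (a b : Fin d → ℝ) :
    volume (Box a b) = ∏ i, ENNReal.ofReal (b i - a i) := by
  rw [Box, volume_pi_pi]
  simp [Real.volume_Ioo]

lemma box_ne_top (a b : Fin d → ℝ) : volume (Box a b) ≠ ⊤ := by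
  rw [volume_box]
  exact (ENNReal.prod_lt_top (fun i _ => ENNReal.ofReal_lt_top)).ne

lemma toReal_volume_box (a b : Fin d → ℝ) (h : ∀ i, a i < b i) :
    (volume (Box a b)).toReal = ∏ i, (b i - a i) := by
  rw [volume_box, ENNReal.toReal_prod]
  exact Finset.prod_congr rfl fun i _ => ENNReal.toReal_ofReal (by linarith [h i])

lemma Ioo_add_Ioo {a b c e : ℝ} (h1 : a < b) (h2 : c < e) :
    Ioo a b + Ioo c e = Ioo (a + c) (b + e) := by
  apply Subset.antisymm
  · rintro x ⟨y, hy, z, hz, rfl⟩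
    constructor
    · show a + c < y + z
      exact add_lt_add hy.1 hz.1
    · show y + z < b + e
      exact add_lt_add hy.2 hz.2
  · rintro x ⟨hx1, hx2⟩
    obtain ⟨y, hy1, hy2⟩ := exists_between (show max a (x - e) < min b (x - c) by
      simp only [max_lt_iff, lt_min_iff]
      refine ⟨⟨h1, by linarith⟩, by linarith, by linarith⟩)
    simp only [max_lt_iff, lt_min_iff] at hy1 hy2
    exact ⟨y, ⟨hy1.1, hy2.1⟩, x - y, ⟨by linarith [hy1.2], by linarith [hy2.2]⟩, by ring⟩

lemma pi_add_pi (f g : Fin d → Set ℝ) :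
    (Set.pi univ f) + (Set.pi univ g) = Set.pi univ (fun i => f i + g i) := by
  apply Subset.antisymm
  · rintro x ⟨y, hy, z, hz, rfl⟩ i _
    exact ⟨y i, hy i trivial, z i, hz i trivial, rfl⟩
  · intro x hx
    choose y hy z hz hyz using fun i => hx i trivial
    exact ⟨y, fun i _ => hy i, z, fun i _ => hz i, funext hyz⟩

lemma box_add_box {a b c e : Fin d → ℝ} (h1 : ∀ i, a i < b i) (h2 : ∀ i, c i < e i) :
    Box a b + Box c e = Box (a + c) (b + e) := by
  rw [Box, Box, pi_add_pi]
  exact Set.pi_congr rfl fun i _ => Ioo_add_Ioo (h1 i) (h2 i)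

/-- AM-GM consequence: BM for products. -/
lemma prod_rpow_add_le {d : ℕ} (hd : 0 < d) (u v : Fin d → ℝ)
    (hu : ∀ i, 0 < u i) (hv : ∀ i, 0 < v i) :
    (∏ i, u i) ^ ((1:ℝ)/d) + (∏ i, v i) ^ ((1:ℝ)/d) ≤ (∏ i, (u i + v i)) ^ ((1:ℝ)/d) := by
  have hS : ∀ i, 0 < u i + v i := fun i => add_pos (hu i) (hv i)
  have hprodS : 0 < ∏ i, (u i + v i) := Finset.prod_pos fun i _ => hS i
  have key : ∀ w : Fin d → ℝ, (∀ i, 0 < w i) → (∀ i, w i ≤ u i + v i) →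
      (∏ i, w i) ^ ((1:ℝ)/d) ≤ (∏ i, (u i + v i)) ^ ((1:ℝ)/d) * ((1:ℝ)/d * ∑ i, w i / (u i + v i)) := by
    intro w hw hwle
    have h1 : (∏ i, w i) ^ ((1:ℝ)/d) = (∏ i, (u i + v i)) ^ ((1:ℝ)/d) * ∏ i, (w i / (u i + v i)) ^ ((1:ℝ)/d) := by
      rw [Real.finset_prod_rpow _ _ (fun i _ => (div_nonneg (hw i).le (hS i).le)) _,
        ← Real.mul_rpow hprodS.le (Finset.prod_nonneg fun i _ => div_nonneg (hw i).le (hS i).le),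
        ← Finset.prod_mul_distrib]
      congr 1
      exact Finset.prod_congr rfl fun i _ => (mul_div_cancel₀ _ (hS i).ne').symm
    rw [h1]
    apply mul_le_mul_of_nonneg_left _ (Real.rpow_nonneg hprodS.le _)
    have := Real.geom_mean_le_arith_mean_weighted Finset.univ (fun _ => (1:ℝ)/d)
      (fun i => w i / (u i + v i)) (fun i _ => by positivity)
      (by simp [Finset.card_univ]; field_simp) (fun i _ => (div_nonneg (hw i).le (hS i).le))
    calc ∏ i, (w i / (u i + v i)) ^ ((1:ℝ)/d) ≤ ∑ i : Fin d, (1:ℝ)/d * (w i / (u i + v i)) := this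
      _ = (1:ℝ)/d * ∑ i, w i / (u i + v i) := by rw [Finset.mul_sum]
  have k1 := key u hu (fun i => by linarith [hv i])
  have k2 := key v hv (fun i => by linarith [hu i])
  have hsum : (1:ℝ)/d * (∑ i, u i / (u i + v i)) + (1:ℝ)/d * (∑ i, v i / (u i + v i)) = 1 := by
    rw [← mul_add, ← Finset.sum_add_distrib]
    have : ∀ i ∈ Finset.univ, u i / (u i + v i) + v i / (u i + v i) = 1 := fun i _ => by
      rw [← add_div, div_self (hS i).ne']
    rw [Finset.sum_congr rfl this]
    simp [Finset.card_univ]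
    field_simp
  calc (∏ i, u i) ^ ((1:ℝ)/d) + (∏ i, v i) ^ ((1:ℝ)/d)
      ≤ (∏ i, (u i + v i)) ^ ((1:ℝ)/d) * ((1:ℝ)/d * ∑ i, u i / (u i + v i))
        + (∏ i, (u i + v i)) ^ ((1:ℝ)/d) * ((1:ℝ)/d * ∑ i, v i / (u i + v i)) := add_le_add k1 k2
    _ = (∏ i, (u i + v i)) ^ ((1:ℝ)/d) := by rw [← mul_add, hsum, mul_one]


lemma hyperplane_null (i₀ : Fin d) (c : ℝ) : volume {x : Fin d → ℝ | x i₀ = c} = 0 := by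
  have : {x : Fin d → ℝ | x i₀ = c} = Set.pi Set.univ (fun j => if j = i₀ then {c} else univ) := by
    ext x
    simp only [mem_setOf_eq, Set.mem_pi, mem_univ, forall_true_left]
    constructor
    · intro h j; by_cases hj : j = i₀ <;> simp [hj, h]
    · intro h; have := h i₀; simpa using this
  rw [this, volume_pi_pi]
  apply Finset.prod_eq_zero (Finset.mem_univ i₀)
  simp

lemma box_inter_lt (a b : Fin d → ℝ) (i₀ : Fin d) (c : ℝ) :
    Box a b ∩ {x | x i₀ < c} = Box a (fun i => if i = i₀ then min (b i) c else b i) := by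
  ext x
  simp only [Box, mem_inter_iff, Set.mem_pi, mem_univ, forall_true_left, mem_setOf_eq, mem_Ioo]
  constructor
  · rintro ⟨h1, h2⟩ i
    by_cases hi : i = i₀
    · subst hi; exact ⟨(h1 i).1, by simp [lt_min_iff, (h1 i).2, h2]⟩
    · simp [hi, h1 i]
  · intro h
    refine ⟨fun i => ⟨(h i).1, ?_⟩, ?_⟩
    · by_cases hi : i = i₀
      · have := (h i).2; rw [if_pos hi] at this; exact this.trans_le (min_le_left _ _)
      · have := (h i).2; rwa [if_neg hi] at this
    · have := (h i₀).2; rw [if_pos rfl] at this; exact this.trans_le (min_le_right _ _)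

lemma box_inter_gt (a b : Fin d → ℝ) (i₀ : Fin d) (c : ℝ) :
    Box a b ∩ {x | c < x i₀} = Box (fun i => if i = i₀ then max (a i) c else a i) b := by
  ext x
  simp only [Box, mem_inter_iff, Set.mem_pi, mem_univ, forall_true_left, mem_setOf_eq, mem_Ioo]
  constructor
  · rintro ⟨h1, h2⟩ i
    by_cases hi : i = i₀
    · subst hi; exact ⟨by simp [max_lt_iff, (h1 i).1, h2], (h1 i).2⟩
    · simp [hi, h1 i]
  · intro h
    refine ⟨fun i => ⟨?_, (h i).2⟩, ?_⟩
    · by_cases hi : i = i₀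
      · have := (h i).1; rw [if_pos hi] at this; exact ((le_max_left _ _).trans_lt this)
      · have := (h i).1; rwa [if_neg hi] at this
    · have := (h i₀).1; rw [if_pos rfl] at this; exact (le_max_right _ _).trans_lt this

lemma box_empty {a b : Fin d → ℝ} {i : Fin d} (h : b i ≤ a i) : Box a b = ∅ := by
  apply Set.univ_pi_eq_empty (i := i)
  simp [Ioo_eq_empty_of_le h]

lemma box_subset_box_of_le {a b b' : Fin d → ℝ} (h : ∀ i, b' i ≤ b i) : Box a b' ⊆ Box a b :=
  Set.pi_mono fun i _ => Ioo_subset_Ioo le_rfl (h i)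

lemma box_subset_box_of_le' {a a' b : Fin d → ℝ} (h : ∀ i, a i ≤ a' i) : Box a' b ⊆ Box a b :=
  Set.pi_mono fun i _ => Ioo_subset_Ioo (h i) le_rfl

lemma box_disjoint_coord {a b c e : Fin d → ℝ} (ha : ∀ i, a i < b i) (hc : ∀ i, c i < e i)
    (h : Disjoint (Box a b) (Box c e)) : ∃ i, b i ≤ c i ∨ e i ≤ a i := by
  by_contra hcon
  push_neg at hcon
  have hne : ∀ i, max (a i) (c i) < min (b i) (e i) := by
    intro i
    obtain ⟨h1, h2⟩ := hcon i
    simp only [max_lt_iff, lt_min_iff]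
    exact ⟨⟨ha i, h1⟩, h2, hc i⟩
  choose y hy using fun i => exists_between (hne i)
  have hyA : y ∈ Box a b := fun i _ => by
    have := hy i
    simp only [max_lt_iff, lt_min_iff] at this
    exact ⟨this.1.1, this.2.1⟩
  have hyC : y ∈ Box c e := fun i _ => by
    have := hy i
    simp only [max_lt_iff, lt_min_iff] at this
    exact ⟨this.1.2, this.2.2⟩
  exact absurd (h.ne_of_mem hyA hyC) (fun hh => hh rfl)

lemma measurable_halfspace_lt (i₀ : Fin d) (c : ℝ) : MeasurableSet {x : Fin d → ℝ | x i₀ < c} :=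
  measurableSet_lt (measurable_pi_apply i₀) measurable_const

lemma measurable_halfspace_gt (i₀ : Fin d) (c : ℝ) : MeasurableSet {x : Fin d → ℝ | c < x i₀} :=
  measurableSet_lt measurable_const (measurable_pi_apply i₀)

/-- splitting a measurable set by a hyperplane -/
lemma split_measure (A : Set (Fin d → ℝ)) (hA : MeasurableSet A) (i₀ : Fin d) (c : ℝ) :
    volume A = volume (A ∩ {x | x i₀ < c}) + volume (A ∩ {x | c < x i₀}) := by
  apply le_antisymm
  · have hcover : A ⊆ (A ∩ {x | x i₀ < c}) ∪ ((A ∩ {x | c < x i₀}) ∪ (A ∩ {x | x i₀ = c})) := by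
      intro x hx
      rcases lt_trichotomy (x i₀) c with h | h | h
      · exact Or.inl ⟨hx, h⟩
      · exact Or.inr (Or.inr ⟨hx, h⟩)
      · exact Or.inr (Or.inl ⟨hx, h⟩)
    calc volume A ≤ volume ((A ∩ {x | x i₀ < c}) ∪ ((A ∩ {x | c < x i₀}) ∪ (A ∩ {x | x i₀ = c}))) :=
          measure_mono hcover
      _ ≤ volume (A ∩ {x | x i₀ < c}) + (volume (A ∩ {x | c < x i₀}) + volume (A ∩ {x | x i₀ = c})) :=
          le_trans (measure_union_le _ _) (by gcongr; exact measure_union_le _ _)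
      _ ≤ volume (A ∩ {x | x i₀ < c}) + (volume (A ∩ {x | c < x i₀}) + 0) := by
          gcongr
          calc volume (A ∩ {x | x i₀ = c}) ≤ volume ({x : Fin d → ℝ | x i₀ = c}) :=
                measure_mono inter_subset_right
            _ = 0 := hyperplane_null i₀ c
      _ = volume (A ∩ {x | x i₀ < c}) + volume (A ∩ {x | c < x i₀}) := by rw [add_zero]
  · rw [← measure_union _ (hA.inter (measurable_halfspace_gt i₀ c))]
    · exact measure_mono (union_subset inter_subset_left inter_subset_left)
    · exact Disjoint.mono inter_subset_right inter_subset_right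
        (by rw [Set.disjoint_left]; intro x h1 h2
            simp only [mem_setOf_eq] at h1 h2; exact lt_asymm h1 h2)

lemma biUnion_filter_eq (s : Finset ι) (p : ι → Prop) [DecidablePred p] (f : ι → Set (Fin d → ℝ))
    (h : ∀ k ∈ s, ¬ p k → f k = ∅) : ⋃ k ∈ s, f k = ⋃ k ∈ s.filter p, f k := by
  apply Subset.antisymm
  · intro x hx
    simp only [mem_iUnion, exists_prop] at hx ⊢
    obtain ⟨k, hk, hxk⟩ := hx
    by_cases hp : p k
    · exact ⟨k, Finset.mem_filter.mpr ⟨hk, hp⟩, hxk⟩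
    · rw [h k hk hp] at hxk; exact absurd hxk (notMem_empty x)
  · exact Set.iUnion₂_mono' fun k hk => ⟨k, Finset.mem_filter.mp hk |>.1, le_rfl⟩

lemma boxU_meas (s : Finset ι) (a b : ι → Fin d → ℝ) :
    MeasurableSet (⋃ k ∈ s, Box (a k) (b k)) :=
  s.measurableSet_biUnion fun k _ => box_meas (a k) (b k)

lemma boxU_isOpen (s : Finset ι) (a b : ι → Fin d → ℝ) :
    IsOpen (⋃ k ∈ s, Box (a k) (b k)) :=
  isOpen_iUnion fun k => isOpen_iUnion fun _ => box_isOpen (a k) (b k)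

lemma boxU_ne_top (s : Finset ι) (a b : ι → Fin d → ℝ) :
    volume (⋃ k ∈ s, Box (a k) (b k)) ≠ ⊤ := by
  refine ((measure_biUnion_finset_le s _).trans_lt ?_).ne
  exact ENNReal.sum_lt_top.mpr fun k _ => (box_ne_top (a k) (b k)).lt_top

lemma box_vol_pos {a b : Fin d → ℝ} (h : ∀ i, a i < b i) : 0 < volume (Box a b) := by
  rw [volume_box, pos_iff_ne_zero, Finset.prod_ne_zero_iff]
  exact fun i _ => (ENNReal.ofReal_pos.mpr (sub_pos.mpr (h i))).ne'

/-- representation of a box-union intersected with a lower halfspace -/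
lemma boxU_inter_lt (s : Finset ι) (a b : ι → Fin d → ℝ) (i₀ : Fin d) (r : ℝ) :
    (⋃ k ∈ s, Box (a k) (b k)) ∩ {x | x i₀ < r}
      = ⋃ k ∈ s.filter (fun k => a k i₀ < min (b k i₀) r),
          Box (a k) (fun i => if i = i₀ then min (b k i) r else b k i) := by
  rw [Set.iUnion₂_inter]
  have h1 : ∀ k ∈ s, ¬ (a k i₀ < min (b k i₀) r) →
      Box (a k) (b k) ∩ {x | x i₀ < r} = ∅ := by
    intro k _ hk
    rw [box_inter_lt]
    exact box_empty (i := i₀) (by simpa using not_lt.mp hk)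
  rw [show (⋃ k ∈ s, Box (a k) (b k) ∩ {x | x i₀ < r})
      = ⋃ k ∈ s, Box (a k) (fun i => if i = i₀ then min (b k i) r else b k i) by
    exact Set.iUnion₂_congr fun k _ => box_inter_lt (a k) (b k) i₀ r]
  apply biUnion_filter_eq
  intro k hk hp
  exact box_empty (i := i₀) (by simpa using not_lt.mp hp)

lemma boxU_inter_gt (s : Finset ι) (a b : ι → Fin d → ℝ) (i₀ : Fin d) (r : ℝ) :
    (⋃ k ∈ s, Box (a k) (b k)) ∩ {x | r < x i₀}
      = ⋃ k ∈ s.filter (fun k => max (a k i₀) r < b k i₀),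
          Box (fun i => if i = i₀ then max (a k i) r else a k i) (b k) := by
  rw [Set.iUnion₂_inter]
  rw [show (⋃ k ∈ s, Box (a k) (b k) ∩ {x | r < x i₀})
      = ⋃ k ∈ s, Box (fun i => if i = i₀ then max (a k i) r else a k i) (b k) by
    exact Set.iUnion₂_congr fun k _ => box_inter_gt (a k) (b k) i₀ r]
  apply biUnion_filter_eq
  intro k hk hp
  exact box_empty (i := i₀) (by simpa using not_lt.mp hp)

lemma exists_cut (t : Finset ι) (ht : t.Nonempty) (c e : ι → Fin d → ℝ)
    (hce : ∀ l ∈ t, ∀ i, c l i < e l i)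
    (hdisj : (↑t : Set ι).PairwiseDisjoint fun l => Box (c l) (e l))
    (i₀ : Fin d) (τ : ℝ) (hτ0 : 0 ≤ τ)
    (hτq : τ ≤ (volume (⋃ l ∈ t, Box (c l) (e l))).toReal) :
    ∃ r : ℝ, (volume ((⋃ l ∈ t, Box (c l) (e l)) ∩ {x | x i₀ < r})).toReal = τ := by
  set B := ⋃ l ∈ t, Box (c l) (e l) with hB
  set g : ℝ → ℝ := fun r => (volume (B ∩ {x | x i₀ < r})).toReal with hgdef
  have hrepr : ∀ r, B ∩ {x | x i₀ < r} = ⋃ l ∈ t, (Box (c l) (e l) ∩ {x | x i₀ < r}) :=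
    fun r => by rw [hB]; exact Set.iUnion₂_inter _ _
  have hg : ∀ r, g r = ∑ l ∈ t, ∏ i, max ((if i = i₀ then min (e l i) r else e l i) - c l i) 0 := by
    intro r
    have hmeasvol : volume (B ∩ {x | x i₀ < r}) = ∑ l ∈ t, volume (Box (c l) (e l) ∩ {x | x i₀ < r}) := by
      rw [hrepr r]
      apply measure_biUnion_finset
      · exact hdisj.mono_on fun l _ => inter_subset_left
      · exact fun l _ => (box_meas _ _).inter
          (measurableSet_lt (measurable_pi_apply i₀) measurable_const)
    rw [hgdef]
    simp only [hmeasvol]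
    rw [ENNReal.toReal_sum (fun l _ => by
      rw [box_inter_lt]; exact box_ne_top _ _)]
    apply Finset.sum_congr rfl
    intro l _
    rw [box_inter_lt, volume_box, ENNReal.toReal_prod]
    exact Finset.prod_congr rfl fun i _ => ENNReal.toReal_ofReal' .. ▸ rfl
  have hcont : Continuous g := by
    rw [show g = fun r => ∑ l ∈ t, ∏ i, max ((if i = i₀ then min (e l i) r else e l i) - c l i) 0
      from funext hg]
    apply continuous_finset_sum
    intro l _
    apply continuous_finset_prod
    intro i _
    by_cases hi : i = i₀
    · simp only [hi, if_pos rfl]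
      exact ((continuous_const.min continuous_id).sub continuous_const).max continuous_const
    · simp only [if_neg hi]
      exact continuous_const
  set lo := t.inf' ht (fun l => c l i₀) with hlo
  set hi := t.sup' ht (fun l => e l i₀) with hhi
  have hglo : g lo = 0 := by
    have : B ∩ {x | x i₀ < lo} = ∅ := by
      rw [eq_empty_iff_forall_notMem]
      rintro x ⟨hxB, hxlt⟩
      simp only [hB, mem_iUnion, exists_prop] at hxB
      obtain ⟨l, hl, hxl⟩ := hxB
      have h1 : c l i₀ < x i₀ := (hxl i₀ trivial).1
      have h2 : lo ≤ c l i₀ := Finset.inf'_le _ hl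
      simp only [mem_setOf_eq] at hxlt
      linarith
    simp [hgdef, this]
  have hghi : g hi = (volume B).toReal := by
    have : B ∩ {x | x i₀ < hi} = B := by
      apply inter_eq_left.mpr
      intro x hxB
      simp only [hB, mem_iUnion, exists_prop] at hxB
      obtain ⟨l, hl, hxl⟩ := hxB
      have h1 : x i₀ < e l i₀ := (hxl i₀ trivial).2
      refine lt_of_lt_of_le h1 ?_
      rw [hhi]
      exact Finset.le_sup' (fun l => e l i₀) hl
    rw [hgdef]; simp only [this]
  have hlohi : lo ≤ hi := by
    obtain ⟨l, hl⟩ := ht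
    have h1 : lo ≤ c l i₀ := by rw [hlo]; exact Finset.inf'_le (fun l => c l i₀) hl
    have h2 : e l i₀ ≤ hi := by rw [hhi]; exact Finset.le_sup' (fun l => e l i₀) hl
    linarith [hce l hl i₀]
  have := intermediate_value_Icc hlohi hcont.continuousOn
  have hmem : τ ∈ Icc (g lo) (g hi) := by rw [hglo, hghi]; exact ⟨hτ0, hτq⟩
  obtain ⟨r, _, hr⟩ := this hmem
  exact ⟨r, hr⟩

/-- arithmetic helper -/
lemma pow_accum {d : ℕ} (hd : 0 < d) {p q Z θ : ℝ} (hθ : 0 ≤ θ) (hp : 0 ≤ p) (hq : 0 ≤ q)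
    (hZ : 0 ≤ Z) (h : (θ * p) ^ ((1:ℝ)/d) + (θ * q) ^ ((1:ℝ)/d) ≤ Z ^ ((1:ℝ)/d)) :
    θ * (p ^ ((1:ℝ)/d) + q ^ ((1:ℝ)/d)) ^ d ≤ Z := by
  have key : (θ * p) ^ ((1:ℝ)/d) + (θ * q) ^ ((1:ℝ)/d)
      = θ ^ ((1:ℝ)/d) * (p ^ ((1:ℝ)/d) + q ^ ((1:ℝ)/d)) := by
    rw [Real.mul_rpow hθ hp, Real.mul_rpow hθ hq, mul_add]
  have h1 : θ * (p ^ ((1:ℝ)/d) + q ^ ((1:ℝ)/d)) ^ d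
      = (θ ^ ((1:ℝ)/d) * (p ^ ((1:ℝ)/d) + q ^ ((1:ℝ)/d))) ^ d := by
    rw [mul_pow, one_div, Real.rpow_inv_natCast_pow hθ hd.ne']
  rw [h1]
  calc (θ ^ ((1:ℝ)/d) * (p ^ ((1:ℝ)/d) + q ^ ((1:ℝ)/d))) ^ d
      ≤ (Z ^ ((1:ℝ)/d)) ^ d := by
        apply pow_le_pow_left₀ _ (key ▸ h)
        positivity
    _ = Z := by rw [one_div, Real.rpow_inv_natCast_pow hZ hd.ne']

lemma bm_step (hd : 0 < d) (N : ℕ)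
    (ih : ∀ (s t : Finset ι) (a b c e : ι → Fin d → ℝ), s.card + t.card ≤ N → s.Nonempty →
      t.Nonempty → (∀ k ∈ s, ∀ i, a k i < b k i) → (∀ l ∈ t, ∀ i, c l i < e l i) →
      ((s : Set ι).PairwiseDisjoint fun k => Box (a k) (b k)) →
      ((t : Set ι).PairwiseDisjoint fun l => Box (c l) (e l)) →
      (volume (⋃ k ∈ s, Box (a k) (b k))).toReal ^ ((1:ℝ)/d)
        + (volume (⋃ l ∈ t, Box (c l) (e l))).toReal ^ ((1:ℝ)/d)
        ≤ (volume ((⋃ k ∈ s, Box (a k) (b k)) + ⋃ l ∈ t, Box (c l) (e l))).toReal ^ ((1:ℝ)/d))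
    (s t : Finset ι) (a b c e : ι → Fin d → ℝ)
    (hcard : s.card + t.card ≤ N + 1) (h2 : 2 ≤ s.card) (htne : t.Nonempty)
    (hab : ∀ k ∈ s, ∀ i, a k i < b k i) (hce : ∀ l ∈ t, ∀ i, c l i < e l i)
    (hdA : (s : Set ι).PairwiseDisjoint fun k => Box (a k) (b k))
    (hdB : (t : Set ι).PairwiseDisjoint fun l => Box (c l) (e l)) :
    (volume (⋃ k ∈ s, Box (a k) (b k))).toReal ^ ((1:ℝ)/d)
      + (volume (⋃ l ∈ t, Box (c l) (e l))).toReal ^ ((1:ℝ)/d)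
      ≤ (volume ((⋃ k ∈ s, Box (a k) (b k)) + ⋃ l ∈ t, Box (c l) (e l))).toReal ^ ((1:ℝ)/d) := by
  classical
  set A := ⋃ k ∈ s, Box (a k) (b k) with hA
  set B := ⋃ l ∈ t, Box (c l) (e l) with hB
  -- find two separated boxes
  obtain ⟨k1, hk1, k2, hk2, hk12⟩ := Finset.one_lt_card.mp h2
  obtain ⟨i₀, hsep⟩ := box_disjoint_coord (hab k1 hk1) (hab k2 hk2)
    (hdA (Finset.mem_coe.mpr hk1) (Finset.mem_coe.mpr hk2) hk12)
  obtain ⟨K1, K2, hK1, hK2, hK12, hcut⟩ :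
      ∃ K1 K2, K1 ∈ s ∧ K2 ∈ s ∧ K1 ≠ K2 ∧ b K1 i₀ ≤ a K2 i₀ := by
    rcases hsep with h | h
    · exact ⟨k1, k2, hk1, hk2, hk12, h⟩
    · exact ⟨k2, k1, hk2, hk1, hk12.symm, h⟩
  set cut := b K1 i₀ with hcutdef
  -- A side data
  set sm := s.filter (fun k => a k i₀ < min (b k i₀) cut) with hsm
  set sp := s.filter (fun k => max (a k i₀) cut < b k i₀) with hsp
  have hAmrep : A ∩ {x | x i₀ < cut}
      = ⋃ k ∈ sm, Box (a k) (fun i => if i = i₀ then min (b k i) cut else b k i) :=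
    boxU_inter_lt s a b i₀ cut
  have hAprep : A ∩ {x | cut < x i₀}
      = ⋃ k ∈ sp, Box (fun i => if i = i₀ then max (a k i) cut else a k i) (b k) :=
    boxU_inter_gt s a b i₀ cut
  have hK1m : K1 ∈ sm := by
    rw [hsm, Finset.mem_filter]
    exact ⟨hK1, by rw [hcutdef, min_self]; exact hab K1 hK1 i₀⟩
  have hK2p : K2 ∈ sp := by
    rw [hsp, Finset.mem_filter]
    exact ⟨hK2, by rw [max_eq_left hcut]; exact hab K2 hK2 i₀⟩
  have hsmcard : sm.card ≤ s.card - 1 := by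
    have hsub : sm ⊆ s.erase K2 := by
      intro k hk
      rw [hsm, Finset.mem_filter] at hk
      refine Finset.mem_erase.mpr ⟨?_, hk.1⟩
      rintro rfl
      have := hk.2
      have h1 : min (b k i₀) cut ≤ cut := min_le_right _ _
      linarith
    calc sm.card ≤ (s.erase K2).card := Finset.card_le_card hsub
      _ = s.card - 1 := Finset.card_erase_of_mem hK2
  have hspcard : sp.card ≤ s.card - 1 := by
    have hsub : sp ⊆ s.erase K1 := by
      intro k hk
      rw [hsp, Finset.mem_filter] at hk
      refine Finset.mem_erase.mpr ⟨?_, hk.1⟩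
      rintro rfl
      have h1 : cut < b k i₀ := lt_of_le_of_lt (le_max_right _ _) hk.2
      rw [hcutdef] at h1
      exact absurd h1 (lt_irrefl _)
    calc sp.card ≤ (s.erase K1).card := Finset.card_le_card hsub
      _ = s.card - 1 := Finset.card_erase_of_mem hK1
  -- nondegeneracy of sub-boxes
  have habm : ∀ k ∈ sm, ∀ i, a k i < (fun i => if i = i₀ then min (b k i) cut else b k i) i := by
    intro k hk i
    rw [hsm, Finset.mem_filter] at hk
    by_cases hi : i = i₀
    · subst hi; simpa using hk.2
    · simpa [hi] using hab k hk.1 i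
  have habp : ∀ k ∈ sp, ∀ i, (fun i => if i = i₀ then max (a k i) cut else a k i) i < b k i := by
    intro k hk i
    rw [hsp, Finset.mem_filter] at hk
    by_cases hi : i = i₀
    · subst hi; simpa using hk.2
    · simpa [hi] using hab k hk.1 i
  have hdAm : (sm : Set ι).PairwiseDisjoint
      fun k => Box (a k) (fun i => if i = i₀ then min (b k i) cut else b k i) := by
    intro x hx y hy hxy
    have hx' : x ∈ s := (Finset.mem_filter.mp (by exact hx)).1
    have hy' : y ∈ s := (Finset.mem_filter.mp (by exact hy)).1
    exact (hdA (Finset.mem_coe.mpr hx') (Finset.mem_coe.mpr hy') hxy).mono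
      (box_subset_box_of_le fun i => by by_cases hi : i = i₀ <;> simp [hi, min_le_left])
      (box_subset_box_of_le fun i => by by_cases hi : i = i₀ <;> simp [hi, min_le_left])
  have hdAp : (sp : Set ι).PairwiseDisjoint
      fun k => Box (fun i => if i = i₀ then max (a k i) cut else a k i) (b k) := by
    intro x hx y hy hxy
    have hx' : x ∈ s := (Finset.mem_filter.mp (by exact hx)).1
    have hy' : y ∈ s := (Finset.mem_filter.mp (by exact hy)).1
    exact (hdA (Finset.mem_coe.mpr hx') (Finset.mem_coe.mpr hy') hxy).mono
      (box_subset_box_of_le' fun i => by by_cases hi : i = i₀ <;> simp [hi, le_max_left])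
      (box_subset_box_of_le' fun i => by by_cases hi : i = i₀ <;> simp [hi, le_max_left])
  -- volumes on the A side
  have hAfin : volume A ≠ ⊤ := boxU_ne_top s a b
  have hAmfin : volume (A ∩ {x | x i₀ < cut}) ≠ ⊤ :=
    (measure_mono inter_subset_left).trans_lt hAfin.lt_top |>.ne
  have hApfin : volume (A ∩ {x | cut < x i₀}) ≠ ⊤ :=
    (measure_mono inter_subset_left).trans_lt hAfin.lt_top |>.ne
  set xm := (volume (A ∩ {x | x i₀ < cut})).toReal with hxm
  set xp := (volume (A ∩ {x | cut < x i₀})).toReal with hxp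
  set p := (volume A).toReal with hpdef
  have hsplitA : p = xm + xp := by
    rw [hpdef, split_measure A (boxU_meas s a b) i₀ cut, ENNReal.toReal_add hAmfin hApfin]
  have hxmpos : 0 < xm := by
    rw [hxm]
    apply ENNReal.toReal_pos _ hAmfin
    have hsub : Box (a K1) (fun i => if i = i₀ then min (b K1 i) cut else b K1 i)
        ⊆ A ∩ {x | x i₀ < cut} := by
      rw [hAmrep]
      intro x hx
      exact Set.mem_iUnion.mpr ⟨K1, Set.mem_iUnion.mpr ⟨hK1m, hx⟩⟩
    exact ((box_vol_pos (habm K1 hK1m)).trans_le (measure_mono hsub)).ne'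
  have hxppos : 0 < xp := by
    rw [hxp]
    apply ENNReal.toReal_pos _ hApfin
    have hsub : Box (fun i => if i = i₀ then max (a K2 i) cut else a K2 i) (b K2)
        ⊆ A ∩ {x | cut < x i₀} := by
      rw [hAprep]
      intro x hx
      exact Set.mem_iUnion.mpr ⟨K2, Set.mem_iUnion.mpr ⟨hK2p, hx⟩⟩
    exact ((box_vol_pos (habp K2 hK2p)).trans_le (measure_mono hsub)).ne'
  have hppos : 0 < p := by rw [hsplitA]; linarith
  set θ := xm / p with hθdef
  have hθpos : 0 < θ := div_pos hxmpos hppos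
  have hθlt1 : θ < 1 := by
    rw [hθdef, div_lt_one hppos, hsplitA]
    linarith
  -- B side
  set q := (volume B).toReal with hqdef
  have hBfin : volume B ≠ ⊤ := boxU_ne_top t c e
  have hqpos : 0 < q := by
    obtain ⟨l, hl⟩ := htne
    apply ENNReal.toReal_pos _ hBfin
    have hsub : Box (c l) (e l) ⊆ B := fun x hx =>
      Set.mem_iUnion.mpr ⟨l, Set.mem_iUnion.mpr ⟨hl, hx⟩⟩
    exact ((box_vol_pos (hce l hl)).trans_le (measure_mono hsub)).ne'
  obtain ⟨r, hr⟩ := exists_cut t htne c e hce hdB i₀ (θ * q)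
    (by positivity)
    (by rw [← hB, ← hqdef]; nlinarith)
  rw [← hB] at hr
  set tm := t.filter (fun l => c l i₀ < min (e l i₀) r) with htm
  set tp := t.filter (fun l => max (c l i₀) r < e l i₀) with htp
  have hBmrep : B ∩ {x | x i₀ < r}
      = ⋃ l ∈ tm, Box (c l) (fun i => if i = i₀ then min (e l i) r else e l i) :=
    boxU_inter_lt t c e i₀ r
  have hBprep : B ∩ {x | r < x i₀}
      = ⋃ l ∈ tp, Box (fun i => if i = i₀ then max (c l i) r else c l i) (e l) :=
    boxU_inter_gt t c e i₀ r
  have hBmfin : volume (B ∩ {x | x i₀ < r}) ≠ ⊤ :=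
    (measure_mono inter_subset_left).trans_lt hBfin.lt_top |>.ne
  have hBpfin : volume (B ∩ {x | r < x i₀}) ≠ ⊤ :=
    (measure_mono inter_subset_left).trans_lt hBfin.lt_top |>.ne
  set ym := (volume (B ∩ {x | x i₀ < r})).toReal with hym
  set yp := (volume (B ∩ {x | r < x i₀})).toReal with hyp
  have hsplitB : q = ym + yp := by
    rw [hqdef, split_measure B (boxU_meas t c e) i₀ r, ENNReal.toReal_add hBmfin hBpfin]
  have hymval : ym = θ * q := hr
  have hypval : yp = (1 - θ) * q := by rw [sub_mul, one_mul]; linarith [hsplitB, hymval]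
  have hymn : 0 < ym := by rw [hymval]; positivity
  have hypn : 0 < yp := by rw [hypval]; nlinarith
  have htmne : tm.Nonempty := by
    rw [Finset.nonempty_iff_ne_empty]
    intro hemp
    rw [hemp] at hBmrep
    simp only [Finset.notMem_empty, iUnion_of_empty, iUnion_empty] at hBmrep
    rw [hym, hBmrep] at hymn
    simp at hymn
  have htpne : tp.Nonempty := by
    rw [Finset.nonempty_iff_ne_empty]
    intro hemp
    rw [hemp] at hBprep
    simp only [Finset.notMem_empty, iUnion_of_empty, iUnion_empty] at hBprep
    rw [hyp, hBprep] at hypn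
    simp at hypn
  have hcem : ∀ l ∈ tm, ∀ i, c l i < (fun i => if i = i₀ then min (e l i) r else e l i) i := by
    intro l hl i
    rw [htm, Finset.mem_filter] at hl
    by_cases hi : i = i₀
    · subst hi; simpa using hl.2
    · simpa [hi] using hce l hl.1 i
  have hcep : ∀ l ∈ tp, ∀ i, (fun i => if i = i₀ then max (c l i) r else c l i) i < e l i := by
    intro l hl i
    rw [htp, Finset.mem_filter] at hl
    by_cases hi : i = i₀
    · subst hi; simpa using hl.2
    · simpa [hi] using hce l hl.1 i
  have hdBm : (tm : Set ι).PairwiseDisjoint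
      fun l => Box (c l) (fun i => if i = i₀ then min (e l i) r else e l i) := by
    intro x hx y hy hxy
    have hx' : x ∈ t := (Finset.mem_filter.mp (by exact hx)).1
    have hy' : y ∈ t := (Finset.mem_filter.mp (by exact hy)).1
    exact (hdB (Finset.mem_coe.mpr hx') (Finset.mem_coe.mpr hy') hxy).mono
      (box_subset_box_of_le fun i => by by_cases hi : i = i₀ <;> simp [hi, min_le_left])
      (box_subset_box_of_le fun i => by by_cases hi : i = i₀ <;> simp [hi, min_le_left])
  have hdBp : (tp : Set ι).PairwiseDisjoint
      fun l => Box (fun i => if i = i₀ then max (c l i) r else c l i) (e l) := by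
    intro x hx y hy hxy
    have hx' : x ∈ t := (Finset.mem_filter.mp (by exact hx)).1
    have hy' : y ∈ t := (Finset.mem_filter.mp (by exact hy)).1
    exact (hdB (Finset.mem_coe.mpr hx') (Finset.mem_coe.mpr hy') hxy).mono
      (box_subset_box_of_le' fun i => by by_cases hi : i = i₀ <;> simp [hi, le_max_left])
      (box_subset_box_of_le' fun i => by by_cases hi : i = i₀ <;> simp [hi, le_max_left])
  -- apply the induction hypothesis to both halves
  have hsmne : sm.Nonempty := ⟨K1, hK1m⟩
  have hspne : sp.Nonempty := ⟨K2, hK2p⟩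
  have hcard1 : sm.card + tm.card ≤ N := by
    have h1 : tm.card ≤ t.card := Finset.card_filter_le _ _
    omega
  have hcard2 : sp.card + tp.card ≤ N := by
    have h1 : tp.card ≤ t.card := Finset.card_filter_le _ _
    omega
  have IH1 := ih sm tm a (fun k => fun i => if i = i₀ then min (b k i) cut else b k i)
    c (fun l => fun i => if i = i₀ then min (e l i) r else e l i)
    hcard1 hsmne htmne habm hcem hdAm hdBm
  have IH2 := ih sp tp (fun k => fun i => if i = i₀ then max (a k i) cut else a k i) b
    (fun l => fun i => if i = i₀ then max (c l i) r else c l i) e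
    hcard2 hspne htpne habp hcep hdAp hdBp
  rw [← hAmrep, ← hBmrep] at IH1
  rw [← hAprep, ← hBprep] at IH2
  -- geometry: the two half sums are disjoint subsets of A + B
  set Sm := (A ∩ {x | x i₀ < cut}) + (B ∩ {x | x i₀ < r}) with hSm
  set Sp := (A ∩ {x | cut < x i₀}) + (B ∩ {x | r < x i₀}) with hSp
  have hdisjS : Disjoint Sm Sp := by
    rw [Set.disjoint_left]
    rintro z ⟨u, hu, v, hv, rfl⟩ ⟨u', hu', v', hv', heq⟩
    have h1 : u i₀ < cut := hu.2
    have h2 : v i₀ < r := hv.2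
    have h3 : cut < u' i₀ := hu'.2
    have h4 : r < v' i₀ := hv'.2
    have h5 : u' i₀ + v' i₀ = u i₀ + v i₀ := by
      have := congrFun heq i₀
      simpa using this
    linarith
  have hSpmeas : MeasurableSet Sp := by
    rw [hSp, hAprep, hBprep]
    exact (IsOpen.add_left (boxU_isOpen tp _ _)).measurableSet
  have hsubS : Sm ∪ Sp ⊆ A + B :=
    union_subset (add_subset_add inter_subset_left inter_subset_left)
      (add_subset_add inter_subset_left inter_subset_left)
  have hABfin : volume (A + B) ≠ ⊤ := by
    have hrepr : A + B = ⋃ k ∈ s, ⋃ l ∈ t, (Box (a k) (b k) + Box (c l) (e l)) := by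
      rw [hA, hB]
      simp_rw [Set.iUnion_add, Set.add_iUnion]
    rw [hrepr]
    refine ((measure_biUnion_finset_le s _).trans_lt ?_).ne
    refine ENNReal.sum_lt_top.mpr fun k hk => ?_
    refine (measure_biUnion_finset_le t _).trans_lt ?_
    refine ENNReal.sum_lt_top.mpr fun l hl => ?_
    rw [box_add_box (hab k hk) (hce l hl)]
    exact (box_ne_top _ _).lt_top
  have hkey : volume Sm + volume Sp ≤ volume (A + B) := by
    rw [← measure_union hdisjS hSpmeas]
    exact measure_mono hsubS
  have hSmfin : volume Sm ≠ ⊤ := ((le_trans (measure_mono (subset_union_left.trans hsubS))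
    le_rfl).trans_lt hABfin.lt_top).ne
  have hSpfin : volume Sp ≠ ⊤ := ((le_trans (measure_mono (subset_union_right.trans hsubS))
    le_rfl).trans_lt hABfin.lt_top).ne
  have hkeyR : (volume Sm).toReal + (volume Sp).toReal ≤ (volume (A + B)).toReal := by
    rw [← ENNReal.toReal_add hSmfin hSpfin]
    exact ENNReal.toReal_mono hABfin hkey
  -- arithmetic conclusion
  have hxmθ : xm = θ * p := by rw [hθdef]; field_simp
  have hxpθ : xp = (1 - θ) * p := by
    rw [sub_mul, one_mul, ← hxmθ]
    linarith [hsplitA]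
  have hacc1 : θ * (p ^ ((1:ℝ)/d) + q ^ ((1:ℝ)/d)) ^ d ≤ (volume Sm).toReal := by
    apply pow_accum hd hθpos.le hppos.le hqpos.le ENNReal.toReal_nonneg
    rw [← hxmθ, ← hymval]
    exact IH1
  have hacc2 : (1 - θ) * (p ^ ((1:ℝ)/d) + q ^ ((1:ℝ)/d)) ^ d ≤ (volume Sp).toReal := by
    apply pow_accum hd (by linarith) hppos.le hqpos.le ENNReal.toReal_nonneg
    rw [← hxpθ, ← hypval]
    exact IH2
  have hfinal : (p ^ ((1:ℝ)/d) + q ^ ((1:ℝ)/d)) ^ d ≤ (volume (A + B)).toReal := by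
    nlinarith
  have hS0 : 0 ≤ p ^ ((1:ℝ)/d) + q ^ ((1:ℝ)/d) := by positivity
  calc p ^ ((1:ℝ)/d) + q ^ ((1:ℝ)/d)
      = ((p ^ ((1:ℝ)/d) + q ^ ((1:ℝ)/d)) ^ d) ^ ((1:ℝ)/d) := by
        rw [one_div] at hS0 ⊢
        rw [Real.pow_rpow_inv_natCast hS0 hd.ne']
    _ ≤ (volume (A + B)).toReal ^ ((1:ℝ)/d) :=
        Real.rpow_le_rpow (by positivity) hfinal (by positivity)

theorem bm_boxes (hd : 0 < d) : ∀ (N : ℕ) (s t : Finset ι) (a b c e : ι → Fin d → ℝ),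
    s.card + t.card ≤ N → s.Nonempty → t.Nonempty →
    (∀ k ∈ s, ∀ i, a k i < b k i) → (∀ l ∈ t, ∀ i, c l i < e l i) →
    ((s : Set ι).PairwiseDisjoint fun k => Box (a k) (b k)) →
    ((t : Set ι).PairwiseDisjoint fun l => Box (c l) (e l)) →
    (volume (⋃ k ∈ s, Box (a k) (b k))).toReal ^ ((1:ℝ)/d)
      + (volume (⋃ l ∈ t, Box (c l) (e l))).toReal ^ ((1:ℝ)/d)
      ≤ (volume ((⋃ k ∈ s, Box (a k) (b k)) + ⋃ l ∈ t, Box (c l) (e l))).toReal ^ ((1:ℝ)/d) := by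
  intro N
  induction N with
  | zero =>
    intro s t a b c e hcard hsne htne _ _ _ _
    have := Finset.card_pos.mpr hsne
    omega
  | succ N ih =>
    intro s t a b c e hcard hsne htne hab hce hdA hdB
    by_cases h2s : 2 ≤ s.card
    · exact bm_step hd N ih s t a b c e hcard h2s htne hab hce hdA hdB
    · by_cases h2t : 2 ≤ t.card
      · have h := bm_step hd N ih t s c e a b (by omega) h2t hsne hce hab hdB hdA
        rw [show ((⋃ l ∈ t, Box (c l) (e l)) + ⋃ k ∈ s, Box (a k) (b k))
            = ((⋃ k ∈ s, Box (a k) (b k)) + ⋃ l ∈ t, Box (c l) (e l)) from add_comm _ _] at h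
        linarith
      · -- base case: single boxes
        have hs1 : s.card = 1 := by
          have := Finset.card_pos.mpr hsne; omega
        have ht1 : t.card = 1 := by
          have := Finset.card_pos.mpr htne; omega
        obtain ⟨k, rfl⟩ := Finset.card_eq_one.mp hs1
        obtain ⟨l, rfl⟩ := Finset.card_eq_one.mp ht1
        have hsimp1 : (⋃ k' ∈ ({k} : Finset ι), Box (a k') (b k')) = Box (a k) (b k) := by
          simp
        have hsimp2 : (⋃ l' ∈ ({l} : Finset ι), Box (c l') (e l')) = Box (c l) (e l) := by
          simp
        rw [hsimp1, hsimp2]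
        have habk := hab k (Finset.mem_singleton_self k)
        have hcel := hce l (Finset.mem_singleton_self l)
        rw [box_add_box habk hcel, toReal_volume_box _ _ habk, toReal_volume_box _ _ hcel,
          toReal_volume_box _ _ (fun i => by
            have := habk i; have := hcel i
            show a k i + c l i < b k i + e l i
            linarith)]
        have := prod_rpow_add_le hd (fun i => b k i - a k i) (fun i => e l i - c l i)
          (fun i => sub_pos.mpr (habk i)) (fun i => sub_pos.mpr (hcel i))
        calc (∏ i, (b k i - a k i)) ^ ((1:ℝ)/d) + (∏ i, (e l i - c l i)) ^ ((1:ℝ)/d)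
            ≤ (∏ i, ((b k i - a k i) + (e l i - c l i))) ^ ((1:ℝ)/d) := this
          _ = (∏ i, ((b k + e l) i - (a k + c l) i)) ^ ((1:ℝ)/d) := by
              congr 1
              exact Finset.prod_congr rfl fun i _ => by simp [Pi.add_apply]; ring

/-- grid cube approximation of a compact set -/
lemma compact_box_approx (K : Set (Fin d → ℝ)) (hK : IsCompact K) (hKne : K.Nonempty)
    {δ : ℝ} (hδ : 0 < δ) :
    ∃ (s : Finset (Fin d → ℤ)) (a b : (Fin d → ℤ) → Fin d → ℝ),
      s.Nonempty ∧ (∀ z ∈ s, ∀ i, a z i < b z i) ∧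
      ((s : Set (Fin d → ℤ)).PairwiseDisjoint fun z => Box (a z) (b z)) ∧
      volume K ≤ volume (⋃ z ∈ s, Box (a z) (b z)) ∧
      (⋃ z ∈ s, Box (a z) (b z)) ⊆ Metric.thickening δ K := by
  classical
  set ε := δ / 2 with hε
  have hεpos : 0 < ε := by rw [hε]; linarith
  set a : (Fin d → ℤ) → Fin d → ℝ := fun z i => ε * z i with ha
  set b : (Fin d → ℤ) → Fin d → ℝ := fun z i => ε * z i + ε with hb
  set C : (Fin d → ℤ) → Set (Fin d → ℝ) := fun z => Set.pi univ fun i => Ico (a z i) (b z i)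
    with hC
  -- membership of a point in its cube
  set zof : (Fin d → ℝ) → (Fin d → ℤ) := fun x i => ⌊x i / ε⌋ with hzof
  have hmemC : ∀ x : Fin d → ℝ, x ∈ C (zof x) := by
    intro x i _
    constructor
    · show ε * ⌊x i / ε⌋ ≤ x i
      calc ε * ⌊x i / ε⌋ ≤ ε * (x i / ε) := by
            apply mul_le_mul_of_nonneg_left (Int.floor_le _) hεpos.le
        _ = x i := by field_simp
    · show x i < ε * ⌊x i / ε⌋ + ε
      have h1 : x i / ε < ⌊x i / ε⌋ + 1 := Int.lt_floor_add_one _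
      calc x i = ε * (x i / ε) := by field_simp
        _ < ε * (⌊x i / ε⌋ + 1) := by apply mul_lt_mul_of_pos_left h1 hεpos
        _ = ε * ⌊x i / ε⌋ + ε := by ring
  -- the relevant set of cubes
  set S := {z : Fin d → ℤ | (K ∩ C z).Nonempty} with hS
  obtain ⟨R, hR⟩ := hK.isBounded.subset_closedBall 0
  have hSfin : S.Finite := by
    apply Set.Finite.subset (Set.Finite.pi (t := fun _ : Fin d => {m : ℤ | (m : ℝ) ∈ Icc ((-R - ε)/ε) (R/ε)}) ?_)
    · intro z hz
      obtain ⟨x, hxK, hxC⟩ := hz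
      intro i _
      have hxR : |x i| ≤ R := by
        have h1 := dist_le_pi_dist x 0 i
        have h2 := mem_closedBall.mp (hR hxK)
        simp only [Pi.zero_apply, Real.dist_eq, sub_zero] at h1 h2 ⊢
        calc |x i| = dist (x i) 0 := by simp [Real.dist_eq]
          _ ≤ dist x 0 := dist_le_pi_dist x 0 i
          _ ≤ R := h2
      obtain ⟨hlo, hhi⟩ := hxC i trivial
      rw [abs_le] at hxR
      constructor
      · rw [div_le_iff₀ hεpos]
        have : ε * z i + ε > x i := hhi
        have : x i ≥ -R := hxR.1
        nlinarith
      · rw [le_div_iff₀ hεpos]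
        have : ε * z i ≤ x i := hlo
        have : x i ≤ R := hxR.2
        nlinarith
    · intro i
      have : {m : ℤ | (m : ℝ) ∈ Icc ((-R - ε)/ε) (R/ε)} ⊆ Set.Icc ⌈(-R - ε)/ε⌉ ⌊R/ε⌋ := by
        intro m hm
        exact ⟨Int.ceil_le.mpr hm.1, Int.le_floor.mpr hm.2⟩
      exact (Set.finite_Icc _ _).subset this
  set s := hSfin.toFinset with hsdef
  have hsne : s.Nonempty := by
    obtain ⟨x, hx⟩ := hKne
    rw [hsdef, Set.Finite.toFinset_nonempty]
    exact ⟨zof x, ⟨x, hx, hmemC x⟩⟩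
  have hnondeg : ∀ z ∈ s, ∀ i, a z i < b z i := by
    intro z _ i
    show ε * z i < ε * z i + ε
    linarith
  -- disjointness of the open boxes (cubes)
  have hdisjC : (↑s : Set (Fin d → ℤ)).PairwiseDisjoint fun z => C z := by
    intro z hz z' hz' hne
    obtain ⟨i, hi⟩ := Function.ne_iff.mp hne
    show Disjoint (C z) (C z')
    rw [Set.disjoint_left]
    intro x hx hx'
    obtain ⟨h1, h2⟩ := hx i trivial
    obtain ⟨h3, h4⟩ := hx' i trivial
    rcases lt_or_gt_of_ne hi with h | h
    · have : (z i : ℝ) + 1 ≤ (z' i : ℝ) := by exact_mod_cast h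
      show False
      have e1 : ε * z i + ε ≤ ε * z' i := by nlinarith
      simp only [ha, hb] at h2 h3
      linarith
    · have : (z' i : ℝ) + 1 ≤ (z i : ℝ) := by exact_mod_cast h
      show False
      have e1 : ε * z' i + ε ≤ ε * z i := by nlinarith
      simp only [ha, hb] at h1 h4
      linarith
  have hBoxC : ∀ z, Box (a z) (b z) ⊆ C z := fun z =>
    Set.pi_mono fun i _ => Ioo_subset_Ico_self
  have hdisj : (↑s : Set (Fin d → ℤ)).PairwiseDisjoint fun z => Box (a z) (b z) := by
    intro z hz z' hz' hne
    exact (hdisjC hz hz' hne).mono (hBoxC z) (hBoxC z')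
  -- volume bound
  have hvolC : ∀ z, volume (C z) = volume (Box (a z) (b z)) := by
    intro z
    rw [hC, volume_pi_pi, volume_box]
    exact Finset.prod_congr rfl fun i _ => by rw [Real.volume_Ico]
  have hcover : K ⊆ ⋃ z ∈ s, C z := by
    intro x hx
    refine Set.mem_iUnion.mpr ⟨zof x, Set.mem_iUnion.mpr ⟨?_, hmemC x⟩⟩
    rw [hsdef, Set.Finite.mem_toFinset]
    exact ⟨x, hx, hmemC x⟩
  have hvol : volume K ≤ volume (⋃ z ∈ s, Box (a z) (b z)) := by
    calc volume K ≤ volume (⋃ z ∈ s, C z) := measure_mono hcover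
      _ ≤ ∑ z ∈ s, volume (C z) := measure_biUnion_finset_le s C
      _ = ∑ z ∈ s, volume (Box (a z) (b z)) := Finset.sum_congr rfl fun z _ => hvolC z
      _ = volume (⋃ z ∈ s, Box (a z) (b z)) :=
          (measure_biUnion_finset hdisj fun z _ => box_meas (a z) (b z)).symm
  -- thickening bound
  have hthick : (⋃ z ∈ s, Box (a z) (b z)) ⊆ Metric.thickening δ K := by
    intro x hx
    simp only [Set.mem_iUnion, exists_prop] at hx
    obtain ⟨z, hzs, hxz⟩ := hx
    rw [hsdef, Set.Finite.mem_toFinset] at hzs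
    obtain ⟨w, hwK, hwC⟩ := hzs
    rw [Metric.mem_thickening_iff]
    refine ⟨w, hwK, ?_⟩
    rw [dist_pi_lt_iff hδ]
    intro i
    have h1 := (hBoxC z hxz) i trivial
    have h2 := hwC i trivial
    rw [Real.dist_eq, abs_lt]
    simp only [mem_Ico] at h1 h2
    have hba : b z i - a z i = ε := by
      show (ε * (z i : ℝ) + ε) - (ε * (z i : ℝ)) = ε
      ring
    have hεδ : ε < δ := by rw [hε]; linarith
    exact ⟨by linarith [h1.1, h1.2, h2.1, h2.2], by linarith [h1.1, h1.2, h2.1, h2.2]⟩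
  exact ⟨s, a, b, hsne, hnondeg, hdisj, hvol, hthick⟩

lemma thickening_eq_add_ball (E : Set (Fin d → ℝ)) (δ : ℝ) :
    Metric.thickening δ E = E + Metric.ball 0 δ := by
  ext x
  rw [Metric.mem_thickening_iff]
  constructor
  · rintro ⟨z, hz, hdist⟩
    refine ⟨z, hz, x - z, ?_, by simp⟩
    rw [mem_ball, dist_eq_norm, sub_zero]
    rw [dist_eq_norm] at hdist
    exact hdist
  · rintro ⟨z, hz, w, hw, rfl⟩
    refine ⟨z, hz, ?_⟩
    rw [mem_ball, dist_eq_norm, sub_zero] at hw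
    rw [dist_eq_norm]
    simpa using hw

lemma ball_add_ball' (δ : ℝ) :
    (Metric.ball (0 : Fin d → ℝ) δ) + Metric.ball 0 δ ⊆ Metric.ball 0 (2 * δ) := by
  rintro x ⟨u, hu, v, hv, rfl⟩
  rw [mem_ball, dist_eq_norm] at hu hv ⊢
  simp only [sub_zero] at hu hv ⊢
  calc ‖u + v‖ ≤ ‖u‖ + ‖v‖ := norm_add_le u v
    _ < 2 * δ := by linarith

lemma bm_compact (hd : 0 < d) (K L : Set (Fin d → ℝ)) (hKc : IsCompact K) (hLc : IsCompact L)
    (hKne : K.Nonempty) (hLne : L.Nonempty) :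
    (volume K).toReal ^ ((1:ℝ)/d) + (volume L).toReal ^ ((1:ℝ)/d)
      ≤ (volume (K + L)).toReal ^ ((1:ℝ)/d) := by
  have hKL : IsCompact (K + L) := hKc.add hLc
  have hKLfin : volume (K + L) ≠ ⊤ := hKL.measure_lt_top.ne
  have key : ∀ δ : ℝ, 0 < δ →
      (volume K).toReal ^ ((1:ℝ)/d) + (volume L).toReal ^ ((1:ℝ)/d)
        ≤ (volume (Metric.cthickening (2 * δ) (K + L))).toReal ^ ((1:ℝ)/d) := by
    intro δ hδ
    obtain ⟨s, a, b, hsne, hndA, hdA, hvA, hthA⟩ := compact_box_approx K hKc hKne hδ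
    obtain ⟨t, c, e, htne, hndB, hdB, hvB, hthB⟩ := compact_box_approx L hLc hLne hδ
    have hbm := bm_boxes hd (s.card + t.card) s t a b c e le_rfl hsne htne hndA hndB hdA hdB
    have hsub : (⋃ z ∈ s, Box (a z) (b z)) + (⋃ z ∈ t, Box (c z) (e z))
        ⊆ Metric.cthickening (2 * δ) (K + L) := by
      refine subset_trans (add_subset_add hthA hthB) ?_
      rw [thickening_eq_add_ball, thickening_eq_add_ball]
      refine subset_trans (by rw [add_add_add_comm]) ?_
      refine subset_trans (add_subset_add_left (ball_add_ball' δ)) ?_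
      rw [← thickening_eq_add_ball]
      exact Metric.thickening_subset_cthickening _ _
    have hthickfin : volume (Metric.cthickening (2 * δ) (K + L)) ≠ ⊤ :=
      (hKL.cthickening).measure_lt_top.ne
    have h1 : (volume K).toReal ≤ (volume (⋃ z ∈ s, Box (a z) (b z))).toReal :=
      ENNReal.toReal_mono (boxU_ne_top s a b) hvA
    have h2 : (volume L).toReal ≤ (volume (⋃ z ∈ t, Box (c z) (e z))).toReal :=
      ENNReal.toReal_mono (boxU_ne_top t c e) hvB
    calc (volume K).toReal ^ ((1:ℝ)/d) + (volume L).toReal ^ ((1:ℝ)/d)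
        ≤ (volume (⋃ z ∈ s, Box (a z) (b z))).toReal ^ ((1:ℝ)/d)
          + (volume (⋃ z ∈ t, Box (c z) (e z))).toReal ^ ((1:ℝ)/d) := by
          exact add_le_add (Real.rpow_le_rpow ENNReal.toReal_nonneg h1 (by positivity))
            (Real.rpow_le_rpow ENNReal.toReal_nonneg h2 (by positivity))
      _ ≤ (volume ((⋃ z ∈ s, Box (a z) (b z)) + ⋃ z ∈ t, Box (c z) (e z))).toReal ^ ((1:ℝ)/d) :=
          hbm
      _ ≤ (volume (Metric.cthickening (2 * δ) (K + L))).toReal ^ ((1:ℝ)/d) := by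
          apply Real.rpow_le_rpow ENNReal.toReal_nonneg
            (ENNReal.toReal_mono hthickfin (measure_mono hsub)) (by positivity)
  -- pass to the limit δ → 0⁺
  have h2δ : Tendsto (fun δ : ℝ => 2 * δ) (𝓝[>] 0) (𝓝 0) := by
    have : Tendsto (fun δ : ℝ => 2 * δ) (𝓝 0) (𝓝 (2 * 0)) :=
      (continuous_const.mul continuous_id).tendsto 0
    simpa using this.mono_left nhdsWithin_le_nhds
  have htend : Tendsto (fun δ : ℝ => volume (Metric.cthickening (2 * δ) (K + L))) (𝓝[>] 0)
      (𝓝 (volume (K + L))) :=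
    (tendsto_measure_cthickening_of_isCompact (μ := volume) hKL).comp h2δ
  have htoReal := (ENNReal.tendsto_toReal hKLfin).comp htend
  have hrpow : Tendsto (fun δ : ℝ => (volume (Metric.cthickening (2 * δ) (K + L))).toReal ^ ((1:ℝ)/d))
      (𝓝[>] 0) (𝓝 ((volume (K + L)).toReal ^ ((1:ℝ)/d))) := by
    exact ((Real.continuousAt_rpow_const _ _ (Or.inr (by positivity))).tendsto).comp htoReal
  exact ge_of_tendsto hrpow (eventually_nhdsWithin_of_forall fun δ hδ => key δ hδ)

lemma bm_meas_open (hd : 0 < d) (A B : Set (Fin d → ℝ)) (hA : MeasurableSet A)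
    (hAne : A.Nonempty) (hBo : IsOpen B) (hBne : B.Nonempty) (hfin : volume (A + B) ≠ ⊤) :
    (volume A).toReal ^ ((1:ℝ)/d) + (volume B).toReal ^ ((1:ℝ)/d)
      ≤ (volume (A + B)).toReal ^ ((1:ℝ)/d) := by
  obtain ⟨a₀, ha₀⟩ := hAne
  obtain ⟨b₀, hb₀⟩ := hBne
  have hfinA : volume A ≠ ⊤ := by
    refine ((measure_mono (fun x hx => ?_)).trans_lt
      ((measure_preimage_add_right volume b₀ (A + B)).trans_lt hfin.lt_top)).ne
    exact (Set.add_mem_add hx hb₀ : x + b₀ ∈ A + B)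
  have hfinB : volume B ≠ ⊤ := by
    refine ((measure_mono (fun x hx => ?_)).trans_lt
      ((measure_preimage_add volume a₀ (A + B)).trans_lt hfin.lt_top)).ne
    exact (Set.add_mem_add ha₀ hx : a₀ + x ∈ A + B)
  set x := (volume A).toReal with hx
  set y := (volume B).toReal with hy
  have hx0 : 0 ≤ x := ENNReal.toReal_nonneg
  have hy0 : 0 ≤ y := ENNReal.toReal_nonneg
  have key : ∀ ε : ℝ, 0 < ε →
      (max (x - ε) 0) ^ ((1:ℝ)/d) + (max (y - ε) 0) ^ ((1:ℝ)/d)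
        ≤ (volume (A + B)).toReal ^ ((1:ℝ)/d) := by
    intro ε hε
    -- compact approximation inside A
    obtain ⟨K, hKA, hKc, hKlt⟩ := hA.exists_isCompact_lt_add hfinA
      (ε := ENNReal.ofReal ε) (ENNReal.ofReal_pos.mpr hε).ne'
    -- compact approximation inside B
    have hlt : ENNReal.ofReal (y - ε) < volume B := by
      rcases le_or_gt (y - ε) 0 with h | h
      · rw [ENNReal.ofReal_eq_zero.mpr h]
        exact hBo.measure_pos volume ⟨b₀, hb₀⟩
      · calc ENNReal.ofReal (y - ε) < ENNReal.ofReal y :=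
            (ENNReal.ofReal_lt_ofReal_iff (by linarith)).mpr (by linarith)
          _ = volume B := ENNReal.ofReal_toReal hfinB
    obtain ⟨L, hLB, hLc, hLgt⟩ := hBo.exists_lt_isCompact hlt
    set K' := K ∪ {a₀} with hK'
    set L' := L ∪ {b₀} with hL'
    have hK'c : IsCompact K' := hKc.union isCompact_singleton
    have hL'c : IsCompact L' := hLc.union isCompact_singleton
    have hK'A : K' ⊆ A := union_subset hKA (by simpa using ha₀)
    have hL'B : L' ⊆ B := union_subset hLB (by simpa using hb₀)
    have hbm := bm_compact hd K' L' hK'c hL'c (by simp [hK']) (by simp [hL'])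
    have hK'fin : volume K' ≠ ⊤ := ((measure_mono hK'A).trans_lt hfinA.lt_top).ne
    have hL'fin : volume L' ≠ ⊤ := ((measure_mono hL'B).trans_lt hfinB.lt_top).ne
    have hKbound : max (x - ε) 0 ≤ (volume K').toReal := by
      apply max_le _ ENNReal.toReal_nonneg
      have h1 : volume A ≤ volume K + ENNReal.ofReal ε := hKlt.le
      have hKfin : volume K ≠ ⊤ := ((measure_mono hKA).trans_lt hfinA.lt_top).ne
      have h2 : x ≤ (volume K).toReal + ε := by
        calc x ≤ (volume K + ENNReal.ofReal ε).toReal :=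
              ENNReal.toReal_mono (by simp [hKfin, ENNReal.ofReal_ne_top]) h1
          _ = (volume K).toReal + ε := by
              rw [ENNReal.toReal_add hKfin ENNReal.ofReal_ne_top, ENNReal.toReal_ofReal hε.le]
      have h3 : (volume K).toReal ≤ (volume K').toReal :=
        ENNReal.toReal_mono hK'fin (measure_mono subset_union_left)
      linarith
    have hLbound : max (y - ε) 0 ≤ (volume L').toReal := by
      have h1 : ENNReal.ofReal (y - ε) ≤ volume L' :=
        hLgt.le.trans (measure_mono subset_union_left)
      have := ENNReal.toReal_mono hL'fin h1
      rw [ENNReal.toReal_ofReal'] at this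
      exact this
    have hsubAB : K' + L' ⊆ A + B := add_subset_add hK'A hL'B
    calc (max (x - ε) 0) ^ ((1:ℝ)/d) + (max (y - ε) 0) ^ ((1:ℝ)/d)
        ≤ (volume K').toReal ^ ((1:ℝ)/d) + (volume L').toReal ^ ((1:ℝ)/d) := by
          exact add_le_add (Real.rpow_le_rpow (le_max_right _ _) hKbound (by positivity))
            (Real.rpow_le_rpow (le_max_right _ _) hLbound (by positivity))
      _ ≤ (volume (K' + L')).toReal ^ ((1:ℝ)/d) := hbm
      _ ≤ (volume (A + B)).toReal ^ ((1:ℝ)/d) :=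
          Real.rpow_le_rpow ENNReal.toReal_nonneg
            (ENNReal.toReal_mono hfin (measure_mono hsubAB)) (by positivity)
  -- limit ε → 0⁺
  have hcont : Continuous fun ε : ℝ =>
      (max (x - ε) 0) ^ ((1:ℝ)/d) + (max (y - ε) 0) ^ ((1:ℝ)/d) := by
    apply Continuous.add
    · apply Continuous.rpow_const ((continuous_const.sub continuous_id).max continuous_const)
      intro z
      exact Or.inr (by positivity)
    · apply Continuous.rpow_const ((continuous_const.sub continuous_id).max continuous_const)
      intro z
      exact Or.inr (by positivity)
  have htend : Tendsto (fun ε : ℝ =>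
      (max (x - ε) 0) ^ ((1:ℝ)/d) + (max (y - ε) 0) ^ ((1:ℝ)/d)) (𝓝[>] 0)
      (𝓝 (x ^ ((1:ℝ)/d) + y ^ ((1:ℝ)/d))) := by
    have := (hcont.tendsto 0).mono_left (nhdsWithin_le_nhds (s := Ioi (0:ℝ)))
    simpa [max_eq_left hx0, max_eq_left hy0] using this
  exact le_of_tendsto htend (eventually_nhdsWithin_of_forall fun ε hε => key ε hε)

def toPi {d : ℕ} (S : Set (EuclideanSpace ℝ (Fin d))) : Set (Fin d → ℝ) := {x | WithLp.toLp 2 x ∈ S}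

lemma vol_toPi {d : ℕ} (S : Set (EuclideanSpace ℝ (Fin d))) (hS : NullMeasurableSet S) :
    volume S = volume (toPi S) :=
  ((MeasurePreserving.symm _
    (EuclideanSpace.volume_preserving_symm_measurableEquiv_toLp (Fin d))).measure_preimage hS).symm

lemma meas_toPi {d : ℕ} (S : Set (EuclideanSpace ℝ (Fin d))) (h : MeasurableSet S) :
    MeasurableSet (toPi S) :=
  (MeasurableEquiv.toLp 2 (Fin d → ℝ)).measurableSet_preimage.mpr h

/-- If T'_1,…,T'_m are pairwise disjoint measurable subsets of the cube
[0,n]^d in ℝ^d, each of volume at most 1, with total volume at least n^d/k, and the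
Minkowski sums T'_i + B(0,t/2) are pairwise disjoint subsets of [−t/2,n+t/2]^d, then
(1 + v_{t/2}^{1/d})^d · n^d / k ≤ (n+t)^d, where v_{t/2} is the volume of the
d-dimensional ball of radius t/2. -/
theorem stmt_9 (d : ℕ) (hd : 0 < d) (n t k : ℝ) (hn : 0 < n) (ht : 0 < t) (hk : 0 < k)
    (m : ℕ) (T : Fin m → Set (EuclideanSpace ℝ (Fin d)))
    (hmeas : ∀ i, MeasurableSet (T i))
    (hsub : ∀ i, T i ⊆ {x | ∀ j, x j ∈ Set.Icc 0 n})
    (hdisj : ∀ i j, i ≠ j → Disjoint (T i) (T j))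
    (hvol : ∀ i, volume (T i) ≤ 1)
    (htotal : ENNReal.ofReal (n ^ d / k) ≤ ∑ i, volume (T i))
    (hdisj' : ∀ i j, i ≠ j →
      Disjoint (T i + Metric.ball (0 : EuclideanSpace ℝ (Fin d)) (t / 2))
               (T j + Metric.ball (0 : EuclideanSpace ℝ (Fin d)) (t / 2)))
    (hsub' : ∀ i, T i + Metric.ball (0 : EuclideanSpace ℝ (Fin d)) (t / 2) ⊆
      {x | ∀ j, x j ∈ Set.Icc (-(t / 2)) (n + t / 2)}) :
    (1 + (volume (Metric.ball (0 : EuclideanSpace ℝ (Fin d)) (t / 2))).toReal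
        ^ ((1 : ℝ) / d)) ^ d * n ^ d / k ≤ (n + t) ^ d := by
  set B := Metric.ball (0 : EuclideanSpace ℝ (Fin d)) (t / 2) with hB
  set v := (volume B).toReal with hv
  have hv0 : 0 ≤ v := ENNReal.toReal_nonneg
  set C := (1 + v ^ ((1:ℝ)/d)) ^ d with hC
  have hC0 : 0 ≤ C := by positivity
  -- the big cube
  set Q := {x : EuclideanSpace ℝ (Fin d) | ∀ j, x j ∈ Set.Icc (-(t / 2)) (n + t / 2)} with hQ
  have hQpi : toPi Q = Set.pi univ (fun _ => Set.Icc (-(t / 2)) (n + t / 2)) := by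
    ext x
    constructor
    · intro hx i _
      exact hx i
    · intro hx j
      exact hx j trivial
  have hQvol : volume Q = ENNReal.ofReal ((n + t) ^ d) := by
    have hQmeas : MeasurableSet (toPi Q) := by
      rw [hQpi]
      exact MeasurableSet.univ_pi fun _ => measurableSet_Icc
    rw [vol_toPi Q (by
      exact (((MeasurableEquiv.toLp 2 (Fin d → ℝ)).symm.measurableSet_preimage).mpr hQmeas).nullMeasurableSet),
      hQpi, volume_pi_pi]
    simp only [Real.volume_Icc]
    rw [Finset.prod_const, Finset.card_univ, Fintype.card_fin,
      ← ENNReal.ofReal_pow (by linarith)]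
    congr 1
    ring_nf
  have hQfin : volume Q ≠ ⊤ := by rw [hQvol]; exact ENNReal.ofReal_ne_top
  -- basic facts about the summands
  have hTBopen : ∀ i : Fin m, IsOpen (toPi (T i + B)) := by
    intro i
    have : IsOpen (T i + B) := IsOpen.add_left Metric.isOpen_ball
    exact this.preimage (PiLp.continuous_toLp (p := 2) (β := fun _ : Fin d => ℝ))
  have hTBmeas : ∀ i : Fin m, MeasurableSet (T i + B) := by
    intro i
    have : IsOpen (T i + B) := IsOpen.add_left Metric.isOpen_ball
    exact this.measurableSet
  have hTBfin : ∀ i : Fin m, volume (T i + B) ≠ ⊤ := fun i =>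
    ((measure_mono (hsub' i)).trans_lt hQfin.lt_top).ne
  have hTfin : ∀ i : Fin m, volume (T i) ≠ ⊤ := fun i =>
    ((hvol i).trans_lt ENNReal.one_lt_top).ne
  -- the per-piece inequality
  have hBopen : IsOpen (toPi B) := by
    have : IsOpen B := Metric.isOpen_ball
    exact this.preimage (PiLp.continuous_toLp (p := 2) (β := fun _ : Fin d => ℝ))
  have hBnePi : (toPi B).Nonempty := by
    have : B.Nonempty := Metric.nonempty_ball.mpr (by linarith)
    obtain ⟨y, hy⟩ := this
    exact ⟨y.ofLp, hy⟩
  have key : ∀ i : Fin m, C * (volume (T i)).toReal ≤ (volume (T i + B)).toReal := by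
    intro i
    rcases Set.eq_empty_or_nonempty (T i) with hTe | hTne
    · simp [hTe, Set.empty_add]
    · set lam := (volume (T i)).toReal with hlam
      have hlam0 : 0 ≤ lam := ENNReal.toReal_nonneg
      have hlam1 : lam ≤ 1 := by
        rw [hlam]
        have h := ENNReal.toReal_mono ENNReal.one_ne_top (hvol i)
        simpa using h
      -- Brunn–Minkowski in the pi space
      have hadd : toPi (T i) + toPi B = toPi (T i + B) := by
          ext x
          constructor
          · rintro ⟨a, ha, b, hb, rfl⟩
            exact ⟨_, ha, _, hb, rfl⟩
          · rintro ⟨a, ha, b, hb, hab⟩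
            exact ⟨a.ofLp, ha, b.ofLp, hb, congrArg WithLp.ofLp hab⟩
      have hbm := bm_meas_open hd (toPi (T i)) (toPi B) (meas_toPi _ (hmeas i)) (by obtain ⟨y, hy⟩ := hTne; exact ⟨y.ofLp, hy⟩)
        hBopen hBnePi
        (by
          rw [hadd, ← vol_toPi (T i + B) (hTBmeas i).nullMeasurableSet]
          exact hTBfin i)
      rw [hadd, ← vol_toPi (T i) (hmeas i).nullMeasurableSet,
        ← vol_toPi B Metric.isOpen_ball.measurableSet.nullMeasurableSet,
        ← vol_toPi (T i + B) (hTBmeas i).nullMeasurableSet] at hbm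
      -- from (lam^{1/d} + v^{1/d}) bound to C * lam bound
      have h1 : (1 + v ^ ((1:ℝ)/d)) * lam ^ ((1:ℝ)/d)
          ≤ (volume (T i + B)).toReal ^ ((1:ℝ)/d) := by
        have h2 : lam ^ ((1:ℝ)/d) ≤ 1 := Real.rpow_le_one hlam0 hlam1 (by positivity)
        have h3 : lam ^ ((1:ℝ)/d) * v ^ ((1:ℝ)/d) ≤ v ^ ((1:ℝ)/d) :=
          mul_le_of_le_one_left (by positivity) h2
        calc (1 + v ^ ((1:ℝ)/d)) * lam ^ ((1:ℝ)/d)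
            = lam ^ ((1:ℝ)/d) + lam ^ ((1:ℝ)/d) * v ^ ((1:ℝ)/d) := by ring
          _ ≤ lam ^ ((1:ℝ)/d) + v ^ ((1:ℝ)/d) := by linarith
          _ ≤ (volume (T i + B)).toReal ^ ((1:ℝ)/d) := hbm
      calc C * lam = ((1 + v ^ ((1:ℝ)/d)) * lam ^ ((1:ℝ)/d)) ^ d := by
            rw [mul_pow, ← hC]
            congr 1
            rw [one_div, Real.rpow_inv_natCast_pow hlam0 hd.ne']
        _ ≤ ((volume (T i + B)).toReal ^ ((1:ℝ)/d)) ^ d := by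
            apply pow_le_pow_left₀ (by positivity) h1
        _ = (volume (T i + B)).toReal := by
            rw [one_div, Real.rpow_inv_natCast_pow ENNReal.toReal_nonneg hd.ne']
  -- summation
  have hsum1 : n ^ d / k ≤ ∑ i, (volume (T i)).toReal := by
    have hfin : (∑ i, volume (T i)) ≠ ⊤ :=
      (ne_of_lt (ENNReal.sum_lt_top.mpr fun i _ => (hTfin i).lt_top))
    have := ENNReal.toReal_mono hfin htotal
    rwa [ENNReal.toReal_ofReal (by positivity), ENNReal.toReal_sum
      (fun i _ => hTfin i)] at this
  have hsum2 : ∑ i, (volume (T i + B)).toReal ≤ (n + t) ^ d := by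
    have hunion : volume (⋃ i, T i + B) = ∑ i, volume (T i + B) := by
      rw [measure_iUnion (fun i j hij => hdisj' i j hij) (fun i => hTBmeas i), tsum_fintype]
    have hsub2 : (⋃ i, T i + B) ⊆ Q := Set.iUnion_subset fun i => hsub' i
    have h1 : (∑ i, volume (T i + B)) ≤ ENNReal.ofReal ((n + t) ^ d) := by
      rw [← hunion, ← hQvol]
      exact measure_mono hsub2
    have h2 := ENNReal.toReal_mono ENNReal.ofReal_ne_top h1
    rwa [ENNReal.toReal_sum (fun i _ => hTBfin i), ENNReal.toReal_ofReal (by positivity)] at h2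
  calc C * n ^ d / k = C * (n ^ d / k) := by ring
    _ ≤ C * ∑ i, (volume (T i)).toReal := by
        apply mul_le_mul_of_nonneg_left hsum1 hC0
    _ = ∑ i, C * (volume (T i)).toReal := by rw [Finset.mul_sum]
    _ ≤ ∑ i, (volume (T i + B)).toReal := Finset.sum_le_sum fun i _ => key i
    _ ≤ (n + t) ^ d := hsum2

end
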